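/- For every s > 0, the open ball W_s is contained in U. Moreover, for every t ∈ [0, 1] the point (√(s/(1+s))·cos(2πt), √(s/(1+s))·sin(2πt), s) lies on the boundary sphere of W_s, i.e. its Euclidean distance to the center (0, 0, s + ½·(1+s)⁻²) equals r(s). (Thus W_s touches the surface of revolution Σ = ∂U from the inside along the circle at height s, so the inscribed radius of Σ at each point of that circle is at least r(s).) -/

import Mathlib

open Real Set

noncomputable section

/-- The open region `U` enclosed by the model surface of revolution `Σ`:
`U = {x ∈ ℝ³ : x₃ > 0, x₁² + x₂² < x₃/(1+x₃)}`. -/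
def regionU : Set (ℝ × ℝ × ℝ) :=
  {x | 0 < x.2.2 ∧ x.1 ^ 2 + x.2.1 ^ 2 < x.2.2 / (1 + x.2.2)}

/-- The radius `r(s) = ½·(1 + 4s(1+s)³)^{1/2}·(1+s)⁻²`. -/
def rad (s : ℝ) : ℝ := (1 / 2) * Real.sqrt (1 + 4 * s * (1 + s) ^ 3) / (1 + s) ^ 2

/-- The center `(0, 0, s + ½·(1+s)⁻²)` of the ball `W_s`. -/
def ctr (s : ℝ) : ℝ × ℝ × ℝ := (0, 0, s + (1 / 2) / (1 + s) ^ 2)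

/-- The open Euclidean ball `W_s` of radius `r(s)` centered at `(0, 0, s + ½(1+s)⁻²)`. -/
def ballW (s : ℝ) : Set (ℝ × ℝ × ℝ) :=
  {x | (x.1 - (ctr s).1) ^ 2 + (x.2.1 - (ctr s).2.1) ^ 2 + (x.2.2 - (ctr s).2.2) ^ 2
        < (rad s) ^ 2}

lemma rad_sq (s : ℝ) (hs : 0 < s) :
    rad s ^ 2 = (1 + 4 * s * (1 + s) ^ 3) / (4 * (1 + s) ^ 4) := by
  have h1 : (0:ℝ) ≤ 1 + 4 * s * (1 + s) ^ 3 := by positivity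
  unfold rad
  rw [div_pow, mul_pow, sq_sqrt h1]
  field_simp
  ring

/-- For every `s > 0`, the open ball `W_s` is contained in `U`, and
for every `t ∈ [0,1]` the point `(√(s/(1+s))·cos(2πt), √(s/(1+s))·sin(2πt), s)` has
Euclidean distance exactly `r(s)` from the center of `W_s`. -/
theorem stmt6 :
    ∀ s > (0 : ℝ), ballW s ⊆ regionU ∧
      ∀ t ∈ Set.Icc (0 : ℝ) 1,
        Real.sqrt ((Real.sqrt (s / (1 + s)) * Real.cos (2 * π * t) - (ctr s).1) ^ 2
          + (Real.sqrt (s / (1 + s)) * Real.sin (2 * π * t) - (ctr s).2.1) ^ 2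
          + (s - (ctr s).2.2) ^ 2) = rad s := by
  intro s hs
  have h1s : (0:ℝ) < 1 + s := by linarith
  have hr2 := rad_sq s hs
  constructor
  · -- ball ⊆ region
    rintro ⟨x, y, u⟩ hx
    simp only [ballW, ctr, Set.mem_setOf_eq] at hx
    rw [hr2] at hx
    simp only [sub_zero] at hx
    -- positivity of u
    have hu : 0 < u := by
      by_contra h
      push_neg at h
      have hc : (0:ℝ) < s + 1 / 2 / (1 + s) ^ 2 := by positivity
      have hb : (u - (s + 1 / 2 / (1 + s) ^ 2)) ^ 2
          < (1 + 4 * s * (1 + s) ^ 3) / (4 * (1 + s) ^ 4) := by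
        nlinarith [sq_nonneg x, sq_nonneg y]
      have hb' : (u - (s + 1 / 2 / (1 + s) ^ 2)) ^ 2 * (4 * (1 + s) ^ 4)
          < 1 + 4 * s * (1 + s) ^ 3 := by
        rw [← lt_div_iff₀ (by positivity)]
        exact hb
      have hexp : (u - (s + 1 / 2 / (1 + s) ^ 2)) ^ 2 * (4 * (1 + s) ^ 4)
          = (u * (1 + s) ^ 2 * 2 - (s * (1 + s) ^ 2 * 2 + 1)) ^ 2 := by
        field_simp
        ring
      rw [hexp] at hb'
      have hB : (0:ℝ) < s * (1 + s) ^ 2 * 2 + 1 := by positivity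
      nlinarith [mul_nonneg (mul_nonneg (neg_nonneg.2 h) (sq_nonneg (1+s))) hB.le,
        sq_nonneg (u * (1 + s) ^ 2), mul_pos (mul_pos hs hs) (mul_pos h1s h1s),
        mul_pos hs h1s]
    have hu1 : (0:ℝ) < 1 + u := by linarith
    refine ⟨hu, ?_⟩
    -- main inequality
    have hiden : u / (1 + u) - ((1 + 4 * s * (1 + s) ^ 3) / (4 * (1 + s) ^ 4)
          - (u - (s + 1 / 2 / (1 + s) ^ 2)) ^ 2)
        = (u - s) ^ 2 * (u * (1 + s) ^ 2 + s ^ 2 + 2 * s) / ((1 + u) * (1 + s) ^ 2) := by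
      field_simp
      ring
    have hnn : (0:ℝ) ≤ (u - s) ^ 2 * (u * (1 + s) ^ 2 + s ^ 2 + 2 * s)
        / ((1 + u) * (1 + s) ^ 2) := by
      apply div_nonneg
      · apply mul_nonneg (sq_nonneg _)
        nlinarith
      · positivity
    nlinarith [hiden, hnn, hx]
  · -- boundary distance
    intro t _
    set θ := 2 * π * t
    have hsnn : (0:ℝ) ≤ s / (1 + s) := by positivity
    have hkey : (Real.sqrt (s / (1 + s)) * Real.cos θ) ^ 2
        + (Real.sqrt (s / (1 + s)) * Real.sin θ) ^ 2 = s / (1 + s) := by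
      rw [mul_pow, mul_pow, ← mul_add, Real.cos_sq_add_sin_sq, mul_one, sq_sqrt hsnn]
    have hradnn : 0 ≤ rad s := by
      unfold rad
      positivity
    have hE : (Real.sqrt (s / (1 + s)) * Real.cos θ - (ctr s).1) ^ 2
          + (Real.sqrt (s / (1 + s)) * Real.sin θ - (ctr s).2.1) ^ 2
          + (s - (ctr s).2.2) ^ 2 = rad s ^ 2 := by
      simp only [ctr, sub_zero]
      rw [hr2]
      have : (s - (s + 1 / 2 / (1 + s) ^ 2)) ^ 2 = 1 / (4 * (1 + s) ^ 4) := by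
        field_simp
        ring
      rw [this]
      rw [hkey]
      field_simp
      ring
    rw [hE, Real.sqrt_sq hradnn]

end
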